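/- Let v₁, v₂ ∈ ℍ(ℚ) be linearly independent over ℚ, let L be their ℚ-span, and set a₁ = a₁(v₁,v₂), a₂ = a₂(v₁,v₂). Let α, β ∈ ℍ(ℚ) satisfy Nr(α) = Nr(β) = 1. Then α·x·conj β ∈ L for every x ∈ L if and only if there exists λ ∈ {1, −1} such that α·a₁·conj α = λ·a₁ and β·a₂·conj β = λ·a₂. -/

import Mathlib

open Quaternion

namespace Stmt2Aux

lemma re_mul_comm (a b : ℍ[ℚ]) : (a * b).re = (b * a).re := by
  simp only [Quaternion.re_mul]; ring

lemma im_eq (a : ℍ[ℚ]) : a.im = a - Quaternion.coe a.re :=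
  eq_sub_of_add_eq' (Quaternion.re_add_im a)

lemma coe_comm' (r : ℚ) (a : ℍ[ℚ]) : Quaternion.coe r * a = a * Quaternion.coe r :=
  Quaternion.coe_commutes r a

lemma coe_mul_smul' (r : ℚ) (a : ℍ[ℚ]) : a * Quaternion.coe r = r • a :=
  Quaternion.mul_coe_eq_smul r a

lemma smul_coe' (r : ℚ) (a : ℍ[ℚ]) : Quaternion.coe r * a = r • a :=
  Quaternion.coe_mul_eq_smul r a

lemma smul_one_coe (r : ℚ) : r • (1 : ℍ[ℚ]) = Quaternion.coe r := by
  rw [show (1 : ℍ[ℚ]) = Quaternion.coe (1 : ℚ) from rfl, Quaternion.smul_coe, mul_one]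

lemma ne_zero_im (b : ℍ[ℚ]) (h : b.re = 0) (hb : b ≠ 0) :
    b.imI ≠ 0 ∨ b.imJ ≠ 0 ∨ b.imK ≠ 0 := by
  by_contra hc
  push_neg at hc
  exact hb (by ext <;> simp [h, hc.1, hc.2.1, hc.2.2])

lemma mem_center_of_comm {b q : ℍ[ℚ]} (hre : b.re = 0) (hb : b ≠ 0) (h : q * b = b * q) :
    ∃ s t : ℚ, q = Quaternion.coe s + t • b := by
  have e1 : q.imJ * b.imK = q.imK * b.imJ := by
    have := congrArg QuaternionAlgebra.imI h
    simp only [Quaternion.imI_mul, hre, mul_zero, zero_mul] at this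
    linarith
  have e2 : q.imK * b.imI = q.imI * b.imK := by
    have := congrArg QuaternionAlgebra.imJ h
    simp only [Quaternion.imJ_mul, hre, mul_zero, zero_mul] at this
    linarith
  have e3 : q.imI * b.imJ = q.imJ * b.imI := by
    have := congrArg QuaternionAlgebra.imK h
    simp only [Quaternion.imK_mul, hre, mul_zero, zero_mul] at this
    linarith
  rcases ne_zero_im b hre hb with hI | hJ | hK
  · refine ⟨q.re, q.imI / b.imI, ?_⟩
    ext <;> simp [hre] <;> field_simp <;> linarith
  · refine ⟨q.re, q.imJ / b.imJ, ?_⟩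
    ext <;> simp [hre] <;> field_simp <;> linarith
  · refine ⟨q.re, q.imK / b.imK, ?_⟩
    ext <;> simp [hre] <;> field_simp <;> linarith

lemma key1 (v₁ v₂ : ℍ[ℚ]) : (v₁ * star v₂).im * v₁ = v₁ * (star v₂ * v₁).im := by
  rw [im_eq, im_eq, re_mul_comm (star v₂) v₁, sub_mul, mul_sub, coe_comm', mul_assoc]

lemma key2 (v₁ v₂ : ℍ[ℚ]) : (v₁ * star v₂).im * v₂ = v₂ * (star v₂ * v₁).im := by
  have h : v₁ * star v₂ * v₂ = v₂ * (star v₂ * v₁) := by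
    rw [mul_assoc, Quaternion.star_mul_self, ← mul_assoc, Quaternion.self_mul_star,
      Quaternion.coe_commutes]
  rw [im_eq, im_eq, re_mul_comm (star v₂) v₁, sub_mul, mul_sub, coe_comm', h]

lemma indep_facts {v₁ v₂ : ℍ[ℚ]} (hli : LinearIndependent ℚ ![v₁, v₂]) :
    v₂ ≠ 0 ∧ ∀ a : ℚ, a • v₂ ≠ v₁ := by
  rw [linearIndependent_fin2] at hli
  simpa using hli

lemma a1_ne_zero {v₁ v₂ : ℍ[ℚ]} (hli : LinearIndependent ℚ ![v₁, v₂]) :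
    (v₁ * star v₂).im ≠ 0 := by
  obtain ⟨hv2, hsp⟩ := indep_facts hli
  intro h
  have h0 : v₁ * star v₂ = Quaternion.coe (v₁ * star v₂).re :=
    sub_eq_zero.mp ((im_eq (v₁ * star v₂)).symm.trans h)
  have h3 : normSq v₂ • v₁ = (v₁ * star v₂).re • v₂ := by
    rw [← coe_mul_smul' (normSq v₂) v₁, ← smul_coe' _ v₂,
      ← Quaternion.star_mul_self v₂, ← mul_assoc, h0, Quaternion.re_coe]
  have hN : normSq v₂ ≠ 0 := Quaternion.normSq_ne_zero.mpr hv2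
  exact hsp ((normSq v₂)⁻¹ * (v₁ * star v₂).re)
    (by rw [← smul_smul, ← h3, smul_smul, inv_mul_cancel₀ hN, one_smul])

lemma a2_ne_zero {v₁ v₂ : ℍ[ℚ]} (hli : LinearIndependent ℚ ![v₁, v₂]) :
    (star v₂ * v₁).im ≠ 0 := by
  obtain ⟨hv2, hsp⟩ := indep_facts hli
  intro h
  have h0 : star v₂ * v₁ = Quaternion.coe (star v₂ * v₁).re :=
    sub_eq_zero.mp ((im_eq (star v₂ * v₁)).symm.trans h)
  have h3 : normSq v₂ • v₁ = (star v₂ * v₁).re • v₂ := by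
    rw [← smul_coe' (normSq v₂) v₁, ← coe_mul_smul' _ v₂,
      ← Quaternion.self_mul_star v₂, mul_assoc, h0, Quaternion.re_coe]
  have hN : normSq v₂ ≠ 0 := Quaternion.normSq_ne_zero.mpr hv2
  exact hsp ((normSq v₂)⁻¹ * (star v₂ * v₁).re)
    (by rw [← smul_smul, ← h3, smul_smul, inv_mul_cancel₀ hN, one_smul])

lemma conj_im {γ : ℍ[ℚ]} (hγ : normSq γ = 1) (p : ℍ[ℚ]) :
    (γ * p * star γ).im = γ * p.im * star γ := by
  have h1 : γ * star γ = 1 := by rw [Quaternion.self_mul_star, hγ, Quaternion.coe_one]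
  have h2 : star γ * γ = 1 := by rw [Quaternion.star_mul_self, hγ, Quaternion.coe_one]
  have hre : (γ * p * star γ).re = p.re := by
    rw [re_mul_comm, ← mul_assoc, h2, one_mul]
  rw [im_eq, im_eq, hre, mul_sub, sub_mul]
  congr 1
  rw [coe_mul_smul', smul_mul_assoc, h1, smul_one_coe]

lemma prod1 {α β : ℍ[ℚ]} (hβ : normSq β = 1) (v₁ v₂ : ℍ[ℚ]) :
    (α * v₁ * star β) * star (α * v₂ * star β) = α * (v₁ * star v₂) * star α := by
  have h2 : star β * β = 1 := by rw [Quaternion.star_mul_self, hβ, Quaternion.coe_one]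
  simp only [star_mul, star_star, mul_assoc]
  rw [← mul_assoc (star β) β, h2, one_mul]

lemma prod2 {α β : ℍ[ℚ]} (hα : normSq α = 1) (v₁ v₂ : ℍ[ℚ]) :
    star (α * v₂ * star β) * (α * v₁ * star β) = β * (star v₂ * v₁) * star β := by
  have h2 : star α * α = 1 := by rw [Quaternion.star_mul_self, hα, Quaternion.coe_one]
  simp only [star_mul, star_star, mul_assoc]
  rw [← mul_assoc (star α) α, h2, one_mul]

lemma expand1 (a b c d : ℚ) (v₁ v₂ : ℍ[ℚ]) :
    ((a • v₁ + b • v₂) * star (c • v₁ + d • v₂)).im = (a * d - b * c) • (v₁ * star v₂).im := by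
  have hsw : v₂ * star v₁ = star (v₁ * star v₂) := by rw [star_mul, star_star]
  rw [star_add, Quaternion.star_smul, Quaternion.star_smul, add_mul, mul_add, mul_add,
    smul_mul_assoc, smul_mul_assoc, smul_mul_assoc, smul_mul_assoc,
    mul_smul_comm, mul_smul_comm, mul_smul_comm, mul_smul_comm, hsw]
  simp only [Quaternion.im_add, Quaternion.im_smul, Quaternion.self_mul_star,
    Quaternion.im_coe, Quaternion.im_star, smul_zero, smul_neg]
  module

lemma expand2 (a b c d : ℚ) (v₁ v₂ : ℍ[ℚ]) :
    (star (c • v₁ + d • v₂) * (a • v₁ + b • v₂)).im = (a * d - b * c) • (star v₂ * v₁).im := by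
  have hsw : star v₁ * v₂ = star (star v₂ * v₁) := by rw [star_mul, star_star]
  rw [star_add, Quaternion.star_smul, Quaternion.star_smul, add_mul, mul_add, mul_add,
    smul_mul_assoc, smul_mul_assoc, smul_mul_assoc, smul_mul_assoc,
    mul_smul_comm, mul_smul_comm, mul_smul_comm, mul_smul_comm, hsw]
  simp only [Quaternion.im_add, Quaternion.im_smul, Quaternion.star_mul_self,
    Quaternion.im_coe, Quaternion.im_star, smul_zero, smul_neg]
  module

end Stmt2Aux

open Stmt2Aux

/-- Let `v₁, v₂ ∈ ℍ(ℚ)` be linearly independent, `L` their `ℚ`-span, and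
`a₁ = Im(v₁ conj v₂)`, `a₂ = Im(conj v₂ * v₁)`.  If `Nr α = Nr β = 1`, then
`x ↦ α x conj β` preserves `L` iff there is `λ ∈ {1, -1}` with
`α a₁ conj α = λ a₁` and `β a₂ conj β = λ a₂`. -/
theorem stmt_2 (v₁ v₂ : ℍ[ℚ]) (hli : LinearIndependent ℚ ![v₁, v₂])
    (α β : ℍ[ℚ]) (hα : Quaternion.normSq α = 1) (hβ : Quaternion.normSq β = 1) :
    (∀ x ∈ Submodule.span ℚ ({v₁, v₂} : Set ℍ[ℚ]),
        α * x * star β ∈ Submodule.span ℚ ({v₁, v₂} : Set ℍ[ℚ])) ↔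
      ∃ lam : ℚ, (lam = 1 ∨ lam = -1) ∧
        α * (v₁ * star v₂).im * star α = lam • (v₁ * star v₂).im ∧
        β * (star v₂ * v₁).im * star β = lam • (star v₂ * v₁).im := by
  constructor
  · intro H
    have m1 := H v₁ (Submodule.subset_span (by simp))
    have m2 := H v₂ (Submodule.subset_span (by simp))
    obtain ⟨a, b, hab⟩ := Submodule.mem_span_pair.mp m1
    obtain ⟨c, d, hcd⟩ := Submodule.mem_span_pair.mp m2
    have e1 : α * (v₁ * star v₂).im * star α = (a * d - b * c) • (v₁ * star v₂).im := by
      calc α * (v₁ * star v₂).im * star α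
          = (α * (v₁ * star v₂) * star α).im := (conj_im hα _).symm
        _ = ((α * v₁ * star β) * star (α * v₂ * star β)).im := by rw [prod1 hβ]
        _ = ((a • v₁ + b • v₂) * star (c • v₁ + d • v₂)).im := by rw [hab, hcd]
        _ = (a * d - b * c) • (v₁ * star v₂).im := expand1 a b c d v₁ v₂
    have e2 : β * (star v₂ * v₁).im * star β = (a * d - b * c) • (star v₂ * v₁).im := by
      calc β * (star v₂ * v₁).im * star β
          = (β * (star v₂ * v₁) * star β).im := (conj_im hβ _).symm
        _ = (star (α * v₂ * star β) * (α * v₁ * star β)).im := by rw [prod2 hα]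
        _ = (star (c • v₁ + d • v₂) * (a • v₁ + b • v₂)).im := by rw [hab, hcd]
        _ = (a * d - b * c) • (star v₂ * v₁).im := expand2 a b c d v₁ v₂
    refine ⟨a * d - b * c, ?_, e1, e2⟩
    have hnz := a1_ne_zero hli
    have hN : normSq ((v₁ * star v₂).im) ≠ 0 := Quaternion.normSq_ne_zero.mpr hnz
    have hns : ((a * d - b * c) * (a * d - b * c)) * normSq ((v₁ * star v₂).im)
        = 1 * normSq ((v₁ * star v₂).im) := by
      have := congrArg normSq e1
      rw [map_mul, map_mul, Quaternion.normSq_star, hα, Quaternion.normSq_smul] at this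
      rw [one_mul]
      nlinarith [this]
    exact mul_self_eq_one_iff.mp (mul_right_cancel₀ hN hns)
  · rintro ⟨lam, hl, h1, h2⟩
    intro x hx
    obtain ⟨hv2, hsp⟩ := indep_facts hli
    have hv1 : v₁ ≠ 0 := fun h => hsp 0 (by simp [h])
    have hll : lam * lam = 1 := by rcases hl with h | h <;> simp [h]
    have hα2 : star α * α = 1 := by rw [Quaternion.star_mul_self, hα, Quaternion.coe_one]
    have hβ2 : star β * β = 1 := by rw [Quaternion.star_mul_self, hβ, Quaternion.coe_one]
    set a₁ := (v₁ * star v₂).im with ha₁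
    set a₂ := (star v₂ * v₁).im with ha₂
    have k1 : a₁ * α = lam • (α * a₁) := by
      have e : α * a₁ = lam • (a₁ * α) := by
        have := congrArg (· * α) h1
        simpa [mul_assoc, hα2, smul_mul_assoc] using this
      rw [e, smul_smul, hll, one_smul]
    have k2 : a₂ * star β = lam • (star β * a₂) := by
      have := congrArg (star β * ·) h2
      simpa [← mul_assoc, hβ2, mul_smul_comm] using this
    have k3 : a₁ * v₁ = v₁ * a₂ := key1 v₁ v₂
    have k4 : a₁ * v₂ = v₂ * a₂ := key2 v₁ v₂
    have hx' : a₁ * x = x * a₂ := by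
      induction hx using Submodule.span_induction with
      | mem y hy =>
        rcases hy with h | h
        · rw [h]; exact k3
        · rw [Set.mem_singleton_iff.mp h]; exact k4
      | zero => simp
      | add y z _ _ hy hz => rw [mul_add, add_mul, hy, hz]
      | smul c y _ hy => rw [mul_smul_comm, hy, smul_mul_assoc]
    have hy' : a₁ * (α * x * star β) = (α * x * star β) * a₂ := by
      calc a₁ * (α * x * star β) = (a₁ * α) * x * star β := by simp only [mul_assoc]
        _ = (lam • (α * a₁)) * x * star β := by rw [k1]
        _ = lam • (α * (a₁ * x) * star β) := by simp only [smul_mul_assoc, mul_assoc]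
        _ = lam • (α * (x * a₂) * star β) := by rw [hx']
        _ = lam • (α * x * (a₂ * star β)) := by simp only [mul_assoc]
        _ = lam • (α * x * (lam • (star β * a₂))) := by rw [k2]
        _ = (lam * lam) • (α * x * star β * a₂) := by
            simp only [mul_smul_comm, smul_smul, mul_assoc]
        _ = (α * x * star β) * a₂ := by rw [hll, one_smul]
    have ha₂re : a₂.re = 0 := Quaternion.re_im _
    have ha₂ne : a₂ ≠ 0 := a2_ne_zero hli
    have main : ∀ y : ℍ[ℚ], a₁ * y = y * a₂ → ∃ s t : ℚ, y = s • v₁ + t • (v₁ * a₂) := by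
      intro y hy
      have hinv : a₂ * v₁⁻¹ = v₁⁻¹ * a₁ := by
        apply mul_left_cancel₀ hv1
        rw [← mul_assoc, ← mul_assoc, mul_inv_cancel₀ hv1, one_mul, ← k3, mul_assoc,
          mul_inv_cancel₀ hv1, mul_one]
      have hq : (v₁⁻¹ * y) * a₂ = a₂ * (v₁⁻¹ * y) := by
        calc v₁⁻¹ * y * a₂ = v₁⁻¹ * (a₁ * y) := by rw [mul_assoc, ← hy]
          _ = (v₁⁻¹ * a₁) * y := by rw [mul_assoc]
          _ = (a₂ * v₁⁻¹) * y := by rw [hinv]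
          _ = a₂ * (v₁⁻¹ * y) := by rw [mul_assoc]
      obtain ⟨s, t, hst⟩ := mem_center_of_comm ha₂re ha₂ne hq
      refine ⟨s, t, ?_⟩
      have hyy : y = v₁ * (v₁⁻¹ * y) := by rw [← mul_assoc, mul_inv_cancel₀ hv1, one_mul]
      rw [hyy, hst, mul_add, coe_mul_smul', mul_smul_comm]
    obtain ⟨s₀, t₀, h₀⟩ := main v₂ k4
    have ht₀ : t₀ ≠ 0 := by
      intro h
      rw [h, zero_smul, add_zero] at h₀
      rcases eq_or_ne s₀ 0 with h' | h'
      · exact hv2 (by rw [h₀, h', zero_smul])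
      · exact hsp s₀⁻¹ (by rw [h₀, smul_smul, inv_mul_cancel₀ h', one_smul])
    have hva : v₁ * a₂ = t₀⁻¹ • (v₂ - s₀ • v₁) := by
      rw [h₀, add_sub_cancel_left, smul_smul, inv_mul_cancel₀ ht₀, one_smul]
    have hmem : v₁ * a₂ ∈ Submodule.span ℚ ({v₁, v₂} : Set ℍ[ℚ]) := by
      rw [hva]
      exact Submodule.smul_mem _ _ (Submodule.sub_mem _
        (Submodule.subset_span (by simp))
        (Submodule.smul_mem _ _ (Submodule.subset_span (by simp))))
    obtain ⟨s, t, hst⟩ := main (α * x * star β) hy'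
    rw [hst]
    exact Submodule.add_mem _
      (Submodule.smul_mem _ _ (Submodule.subset_span (by simp))) (Submodule.smul_mem _ _ hmem)
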